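/- Fix ε with 0 < ε < 1. Consider the linear ODE system V_yy' = ε·V_m - V_yy, V_m' = V_yy + ε·V_nn - (ε+1)·V_m, V_nn' = V_m - ε·V_nn, with nonnegative initial conditions summing to 1. Then the solutions converge: V_yy(t) → ε²/(ε²+ε+1), V_m(t) → ε/(ε²+ε+1), and V_nn(t) → 1/(ε²+ε+1) as t → ∞. -/

import Mathlib

/-- Solution of the scalar linear ODE f' = c f. -/
lemma stmt_6_ode_sol (f : ℝ → ℝ) (c : ℝ) (h : ∀ t, HasDerivAt f (c * f t) t) (t : ℝ) :
    f t = f 0 * Real.exp (c * t) := by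
  have key : ∀ x : ℝ, f x * Real.exp (-(c * x)) = f 0 := by
    have hD : ∀ x : ℝ, HasDerivAt (fun x => f x * Real.exp (-(c * x))) 0 x := by
      intro x
      have he : HasDerivAt (fun x : ℝ => Real.exp (-(c * x))) (-c * Real.exp (-(c*x))) x := by
        have : HasDerivAt (fun x : ℝ => -(c * x)) (-c) x := by
          have := ((hasDerivAt_id x).const_mul c).neg
          simp only [mul_one] at this
          exact this
        simpa [mul_comm] using this.exp
      have := (h x).mul he
      refine this.congr_deriv ?_
      ring
    have hdiff : Differentiable ℝ (fun x => f x * Real.exp (-(c * x))) :=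
      fun x => (hD x).differentiableAt
    intro x
    have := is_const_of_deriv_eq_zero hdiff (fun x => (hD x).deriv) x 0
    simpa using this
  have := key t
  have h2 : Real.exp (-(c*t)) * Real.exp (c*t) = 1 := by
    rw [← Real.exp_add]; simp
  linear_combination Real.exp (c*t) * this - f t * h2

lemma stmt_6_exp_decay (c : ℝ) (hc : c < 0) (a : ℝ) :
    Filter.Tendsto (fun t : ℝ => a * Real.exp (c * t)) Filter.atTop (nhds 0) := by
  have h1 : Filter.Tendsto (fun t : ℝ => c * t) Filter.atTop Filter.atBot := by
    simpa using Filter.Tendsto.const_mul_atTop_of_neg hc Filter.tendsto_id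
  have h2 := Real.tendsto_exp_atBot.comp h1
  simpa using h2.const_mul a

theorem stmt_6 (ε : ℝ) (hε : 0 < ε) (hε1 : ε < 1)
    (Vyy Vm Vnn : ℝ → ℝ)
    (hyy : ∀ t : ℝ, HasDerivAt Vyy (ε * Vm t - Vyy t) t)
    (hm : ∀ t : ℝ, HasDerivAt Vm (Vyy t + ε * Vnn t - (ε + 1) * Vm t) t)
    (hnn : ∀ t : ℝ, HasDerivAt Vnn (Vm t - ε * Vnn t) t)
    (h0yy : 0 ≤ Vyy 0) (h0m : 0 ≤ Vm 0) (h0nn : 0 ≤ Vnn 0)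
    (hsum : Vyy 0 + Vm 0 + Vnn 0 = 1) :
    Filter.Tendsto Vyy Filter.atTop (nhds (ε ^ 2 / (ε ^ 2 + ε + 1))) ∧
    Filter.Tendsto Vm Filter.atTop (nhds (ε / (ε ^ 2 + ε + 1))) ∧
    Filter.Tendsto Vnn Filter.atTop (nhds (1 / (ε ^ 2 + ε + 1))) := by
  set s : ℝ := Real.sqrt ε with hs_def
  have hs0 : 0 < s := Real.sqrt_pos.mpr hε
  have hs2 : s ^ 2 = ε := Real.sq_sqrt hε.le
  have hs1 : s < 1 := by nlinarith [hs2]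
  -- conservation: sum is constant equal to 1
  have hS : ∀ t : ℝ, Vyy t + Vm t + Vnn t = 1 := by
    have hD' : ∀ t : ℝ, HasDerivAt (fun t => Vyy t + Vm t + Vnn t) 0 t := by
      intro t
      have := ((hyy t).add (hm t)).add (hnn t)
      refine this.congr_deriv ?_
      ring
    have hdiff : Differentiable ℝ (fun t => Vyy t + Vm t + Vnn t) :=
      fun t => (hD' t).differentiableAt
    intro t
    have := is_const_of_deriv_eq_zero hdiff (fun x => (hD' x).deriv) t 0
    simpa [hsum] using this
  -- eigen-combinations
  set f : ℝ → ℝ := fun t => Vyy t + (s - ε) * Vm t - ε * s * Vnn t with hf_def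
  set g : ℝ → ℝ := fun t => Vyy t + (-s - ε) * Vm t + ε * s * Vnn t with hg_def
  have hf' : ∀ t, HasDerivAt f ((s - ε - 1) * f t) t := by
    intro t
    have := ((hyy t).add ((hm t).const_mul (s - ε))).sub ((hnn t).const_mul (ε * s))
    refine this.congr_deriv ?_
    simp only [hf_def]
    rw [← hs2]; ring
  have hg' : ∀ t, HasDerivAt g ((-s - ε - 1) * g t) t := by
    intro t
    have := ((hyy t).add ((hm t).const_mul (-s - ε))).add ((hnn t).const_mul (ε * s))
    refine this.congr_deriv ?_
    simp only [hg_def]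
    rw [← hs2]; ring
  have hfe : ∀ t, f t = f 0 * Real.exp ((s - ε - 1) * t) := stmt_6_ode_sol f _ hf'
  have hge : ∀ t, g t = g 0 * Real.exp ((-s - ε - 1) * t) := stmt_6_ode_sol g _ hg'
  have hcf : s - ε - 1 < 0 := by nlinarith
  have hcg : -s - ε - 1 < 0 := by nlinarith
  have hftends : Filter.Tendsto f Filter.atTop (nhds 0) :=
    (stmt_6_exp_decay _ hcf (f 0)).congr fun t => (hfe t).symm
  have hgtends : Filter.Tendsto g Filter.atTop (nhds 0) :=
    (stmt_6_exp_decay _ hcg (g 0)).congr fun t => (hge t).symm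
  have hDs : (0:ℝ) < s ^ 4 + s ^ 2 + 1 := by positivity
  have hDs' : (s ^ 4 + s ^ 2 + 1 : ℝ) ≠ 0 := ne_of_gt hDs
  have hD : (0:ℝ) < ε ^ 2 + ε + 1 := by positivity
  have hD' : (ε ^ 2 + ε + 1 : ℝ) ≠ 0 := ne_of_gt hD
  have hs0' : s ≠ 0 := ne_of_gt hs0
  -- multiplied-out expressions for each variable
  have keyY : ∀ t, 2 * (s ^ 4 + s ^ 2 + 1) * Vyy t
      = 2 * s ^ 4 + (s ^ 2 + s + 1) * f t + (s ^ 2 - s + 1) * g t := by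
    intro t
    have h1 := hS t
    simp only [hf_def, hg_def]
    rw [← hs2]
    linear_combination (2 * s ^ 4) * h1
  have keyM : ∀ t, 2 * s * (s ^ 4 + s ^ 2 + 1) * Vm t
      = 2 * s ^ 3 + (1 - s ^ 3) * f t - (s ^ 3 + 1) * g t := by
    intro t
    have h1 := hS t
    simp only [hf_def, hg_def]
    rw [← hs2]
    linear_combination (2 * s ^ 3) * h1
  have keyN : ∀ t, 2 * s * (s ^ 4 + s ^ 2 + 1) * Vnn t
      = 2 * s - (s ^ 2 + s + 1) * f t + (s ^ 2 - s + 1) * g t := by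
    intro t
    have h1 := hS t
    simp only [hf_def, hg_def]
    rw [← hs2]
    linear_combination (2 * s) * h1
  -- general convergence principle
  have base : ∀ (C a b c : ℝ), C ≠ 0 →
      Filter.Tendsto (fun t => (a + b * f t + c * g t) / C) Filter.atTop (nhds (a / C)) := by
    intro C a b c hC
    have : Filter.Tendsto (fun t => a + b * f t + c * g t) Filter.atTop
        (nhds (a + b * 0 + c * 0)) :=
      (tendsto_const_nhds.add (hftends.const_mul b)).add (hgtends.const_mul c)
    have h2 := this.div_const C
    simpa using h2
  refine ⟨?_, ?_, ?_⟩
  · have hb := base (2 * (s ^ 4 + s ^ 2 + 1)) (2 * s ^ 4) (s ^ 2 + s + 1) (s ^ 2 - s + 1)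
      (by positivity)
    have heq : ∀ t, Vyy t
        = (2 * s ^ 4 + (s ^ 2 + s + 1) * f t + (s ^ 2 - s + 1) * g t)
          / (2 * (s ^ 4 + s ^ 2 + 1)) := by
      intro t
      rw [eq_div_iff (by positivity)]
      linear_combination keyY t
    have hlim : 2 * s ^ 4 / (2 * (s ^ 4 + s ^ 2 + 1)) = ε ^ 2 / (ε ^ 2 + ε + 1) := by
      rw [← hs2, div_eq_div_iff (by positivity) (by positivity)]
      ring
    rw [← hlim]
    exact hb.congr fun t => (heq t).symm
  · have hb := base (2 * s * (s ^ 4 + s ^ 2 + 1)) (2 * s ^ 3) (1 - s ^ 3) (-(s ^ 3 + 1))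
      (by positivity)
    have heq : ∀ t, Vm t
        = (2 * s ^ 3 + (1 - s ^ 3) * f t + -(s ^ 3 + 1) * g t)
          / (2 * s * (s ^ 4 + s ^ 2 + 1)) := by
      intro t
      rw [eq_div_iff (by positivity)]
      linear_combination keyM t
    have hlim : 2 * s ^ 3 / (2 * s * (s ^ 4 + s ^ 2 + 1)) = ε / (ε ^ 2 + ε + 1) := by
      rw [← hs2, div_eq_div_iff (by positivity) (by positivity)]
      ring
    rw [← hlim]
    exact hb.congr fun t => (heq t).symm
  · have hb := base (2 * s * (s ^ 4 + s ^ 2 + 1)) (2 * s) (-(s ^ 2 + s + 1)) (s ^ 2 - s + 1)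
      (by positivity)
    have heq : ∀ t, Vnn t
        = (2 * s + -(s ^ 2 + s + 1) * f t + (s ^ 2 - s + 1) * g t)
          / (2 * s * (s ^ 4 + s ^ 2 + 1)) := by
      intro t
      rw [eq_div_iff (by positivity)]
      linear_combination keyN t
    have hlim : 2 * s / (2 * s * (s ^ 4 + s ^ 2 + 1)) = 1 / (ε ^ 2 + ε + 1) := by
      rw [← hs2, div_eq_div_iff (by positivity) (by positivity)]
      ring
    rw [← hlim]
    exact hb.congr fun t => (heq t).symm
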